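/- If (X_n) is a skipped-blocking decomposition of X with SBD constant K = sup_n ‖R_n‖ and asymptotic constant K_∞ = limsup_n ‖R_n‖, then for every x ∈ X: ‖x‖ ≤ K_∞ · limsup_n ‖P_n x‖ and ‖x‖ ≤ K · liminf_n ‖P_n x‖. -/

import Mathlib

open Submodule Set Filter Topology

variable {E : Type*} [NormedAddCommGroup E] [NormedSpace ℝ E]

/-- A sequence of subspaces is a DDD: finite-dimensional, total and minimal. -/
def IsDDD (X : ℕ → Submodule ℝ E) : Prop :=
  (∀ n, FiniteDimensional ℝ (X n)) ∧
  (⨆ n, X n).topologicalClosure = ⊤ ∧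
  ∀ n, X n ⊓ (⨆ m ∈ {m | m ≠ n}, X m).topologicalClosure = ⊥

/-- `(W i)` is a finite-dimensional decomposition of its closed linear span:
every element of the closed span is the limit of partial sums of a unique
sequence of vectors `w i ∈ W i`. -/
def IsFDDof (W : ℕ → Submodule ℝ E) : Prop :=
  ∀ x ∈ (⨆ i, W i).topologicalClosure, ∃! w : ℕ → E,
    (∀ i, w i ∈ W i) ∧
      Filter.Tendsto (fun N => ∑ i ∈ Finset.range N, w i) Filter.atTop (nhds x)

/-- Skipped blocking decomposition: a DDD such that every skipped sequence of
blocks is an FDD of its closed linear span. -/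
def IsSBD (X : ℕ → Submodule ℝ E) : Prop :=
  IsDDD X ∧ ∀ n m : ℕ → ℕ, (∀ i, n i ≤ m i) → (∀ i, m i + 1 < n (i + 1)) →
    IsFDDof (fun i => ⨆ j ∈ Set.Icc (n i) (m i), X j)

/-- Minimal f.d. sequence which is a skipped blocking decomposition of its closed span. -/
def IsSBDofSpan (W : ℕ → Submodule ℝ E) : Prop :=
  (∀ n, FiniteDimensional ℝ (W n)) ∧
  (∀ n, W n ⊓ (⨆ m ∈ {m | m ≠ n}, W m).topologicalClosure = ⊥) ∧
  ∀ n m : ℕ → ℕ, (∀ i, n i ≤ m i) → (∀ i, m i + 1 < n (i + 1)) →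
    IsFDDof (fun i => ⨆ j ∈ Set.Icc (n i) (m i), W j)

/-- Norm of the skipped projection `R_{m,k}` onto `X[0,m)` with kernel the closed
span of the tail `X[k+1,∞)` (the spaces `X_m, …, X_k` are skipped). -/
noncomputable def skippedNorm (X : ℕ → Submodule ℝ E) (m k : ℕ) : ℝ :=
  sInf {C : ℝ | 0 ≤ C ∧ ∀ a ∈ (⨆ i ∈ Set.Iio m, X i),
    ∀ b ∈ (⨆ i ∈ Set.Ici (k + 1), X i).topologicalClosure, ‖a‖ ≤ C * ‖a + b‖}

/-- Annihilator of a subspace in the continuous dual. -/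
noncomputable def ann {F : Type*} [NormedAddCommGroup F] [NormedSpace ℝ F] (S : Submodule ℝ F) :
    Submodule ℝ (F →L[ℝ] ℝ) where
  carrier := {f | ∀ x ∈ S, f x = 0}
  add_mem' := by intro f g hf hg x hx; simp [hf x hx, hg x hx]
  zero_mem' := by intro x hx; simp
  smul_mem' := by intro c f hf x hx; simp [hf x hx]

/-- The predecomposition space `Y = [X_n^*]` of a DDD, where
`X_n^* = [X_m]^⊥_{m ≠ n}`. -/
noncomputable def predecomp (X : ℕ → Submodule ℝ E) : Submodule ℝ (E →L[ℝ] ℝ) :=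
  (⨆ n, ann ((⨆ m ∈ {m | m ≠ n}, X m).topologicalClosure)).topologicalClosure

/-- A sequence of subspaces is boundedly complete: boundedness of the partial sums
of a sequence of vectors from the subspaces implies norm convergence. -/
def IsBddCompl (W : ℕ → Submodule ℝ E) : Prop :=
  ∀ v : ℕ → E, (∀ i, v i ∈ W i) →
    BddAbove (Set.range fun N => ‖∑ i ∈ Finset.range N, v i‖) →
    ∃ s : E, Filter.Tendsto (fun N => ∑ i ∈ Finset.range N, v i) Filter.atTop (nhds s)

/-- A Schauder basis of `E`. -/
def IsSchauderBasis (e : ℕ → E) : Prop :=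
  ∀ x : E, ∃! a : ℕ → ℝ,
    Filter.Tendsto (fun N => ∑ i ∈ Finset.range N, a i • e i) Filter.atTop (nhds x)

open scoped ENNReal NNReal


/-- Existence of a bound for the "projection" onto a finite-dimensional subspace
along a closed subspace intersecting it trivially. -/
lemma aux_exists_bound {E : Type*} [NormedAddCommGroup E] [NormedSpace ℝ E]
    (H T : Submodule ℝ E) [FiniteDimensional ℝ H]
    (hTc : IsClosed (T : Set E)) (hd : ∀ a, a ∈ H → a ∈ T → a = 0) :
    ∃ C : ℝ, 0 ≤ C ∧ ∀ a ∈ H, ∀ b ∈ T, ‖a‖ ≤ C * ‖a + b‖ := by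
  by_cases hH : ∀ a ∈ H, a = (0 : E)
  · refine ⟨0, le_rfl, fun a ha b hb => ?_⟩
    rw [hH a ha]; simp
  · push_neg at hH
    obtain ⟨a₀, ha₀, ha₀0⟩ := hH
    have : ProperSpace ↥H := FiniteDimensional.proper ℝ ↥H
    have hScompact : IsCompact (Metric.sphere (0 : ↥H) 1) := isCompact_sphere 0 1
    have hSne : (Metric.sphere (0 : ↥H) 1).Nonempty := by
      refine ⟨⟨‖a₀‖⁻¹ • a₀, H.smul_mem _ ha₀⟩, ?_⟩
      have h0 : ‖a₀‖ ≠ 0 := norm_ne_zero_iff.mpr ha₀0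
      simp only [Metric.mem_sphere, dist_zero_right]
      rw [Submodule.coe_norm]
      simp [norm_smul, h0]
    set F : ↥H → ℝ := fun v => Metric.infDist (v : E) (T : Set E) with hFdef
    have hFc : Continuous F :=
      (Metric.continuous_infDist_pt (T : Set E)).comp continuous_subtype_val
    obtain ⟨u, huS, humin⟩ := hScompact.exists_isMinOn hSne hFc.continuousOn
    set δ := F u with hδdef
    have hu1 : ‖(u : E)‖ = 1 := by
      have := Metric.mem_sphere.mp huS
      rwa [dist_zero_right, Submodule.coe_norm] at this
    have hδpos : 0 < δ := by
      rw [hδdef, hFdef]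
      simp only []
      rw [← (hTc.notMem_iff_infDist_pos ⟨0, T.zero_mem⟩)]
      intro hmem
      rw [hd _ u.2 hmem] at hu1
      simp at hu1
    refine ⟨δ⁻¹, inv_nonneg.mpr hδpos.le, fun a ha b hb => ?_⟩
    by_cases ha0 : a = 0
    · rw [ha0]; simp; positivity
    · have hna : 0 < ‖a‖ := norm_pos_iff.mpr ha0
      have huu : (⟨‖a‖⁻¹ • a, H.smul_mem _ ha⟩ : ↥H) ∈ Metric.sphere (0 : ↥H) 1 := by
        simp only [Metric.mem_sphere, dist_zero_right]
        rw [Submodule.coe_norm]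
        simp [norm_smul, hna.ne']
      have h1 : δ ≤ F ⟨‖a‖⁻¹ • a, H.smul_mem _ ha⟩ := isMinOn_iff.mp humin _ huu
      have h2 : F ⟨‖a‖⁻¹ • a, H.smul_mem _ ha⟩ ≤ ‖(‖a‖⁻¹ • a) + (‖a‖⁻¹ • b)‖ := by
        rw [hFdef]
        have hm : (-(‖a‖⁻¹ • b)) ∈ (T : Set E) := T.neg_mem (T.smul_mem _ hb)
        have := Metric.infDist_le_dist_of_mem (x := ((‖a‖⁻¹ • a : E))) hm
        rwa [dist_eq_norm, sub_neg_eq_add] at this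
      have h3 : ‖(‖a‖⁻¹ • a) + (‖a‖⁻¹ • b)‖ = ‖a‖⁻¹ * ‖a + b‖ := by
        rw [← smul_add, norm_smul]
        simp [hna.le]
      have h4 : δ * ‖a‖ ≤ ‖a + b‖ := by
        have h12 := h1.trans h2
        rw [h3] at h12
        have h5 := mul_le_mul_of_nonneg_right h12 hna.le
        have h6 : ‖a‖⁻¹ * ‖a + b‖ * ‖a‖ = ‖a + b‖ := by field_simp
        linarith
      have hdd : δ * δ⁻¹ = 1 := mul_inv_cancel₀ hδpos.ne'
      nlinarith [mul_le_mul_of_nonneg_left h4 (inv_nonneg.mpr hδpos.le)]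

/-- Hahn–Banach: a functional agreeing with `f` on `H` and vanishing on `T`,
with norm at most `C`. -/
lemma aux_exists_functional {E : Type*} [NormedAddCommGroup E] [NormedSpace ℝ E]
    (H T : Submodule ℝ E) (f : E →L[ℝ] ℝ) (hf : ‖f‖ ≤ 1) (C : ℝ) (hC0 : 0 ≤ C)
    (hC : ∀ a ∈ H, ∀ b ∈ T, ‖a‖ ≤ C * ‖a + b‖) :
    ∃ g : E →L[ℝ] ℝ, ‖g‖ ≤ C ∧ (∀ a ∈ H, g a = f a) ∧ (∀ b ∈ T, g b = 0) := by
  set Z : Submodule ℝ E := H ⊔ T with hZdef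
  set H' : Submodule ℝ ↥Z := H.comap Z.subtype with hH'def
  set T' : Submodule ℝ ↥Z := T.comap Z.subtype with hT'def
  have hd : Disjoint H' T' := by
    rw [Submodule.disjoint_def]
    intro z hzH hzT
    have h0 : ‖(z : E)‖ ≤ C * ‖(z : E) + (-(z : E))‖ :=
      hC _ (Submodule.mem_comap.mp hzH) _ (T.neg_mem (Submodule.mem_comap.mp hzT))
    rw [add_neg_cancel, norm_zero, mul_zero] at h0
    ext
    simpa using le_antisymm h0 (norm_nonneg _)
  have hcompl : IsCompl H' T' := by
    refine ⟨hd, codisjoint_iff_le_sup.mpr ?_⟩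
    rintro ⟨z, hz⟩ -
    obtain ⟨a, ha, b, hb, rfl⟩ := Submodule.mem_sup.mp hz
    have haZ : a ∈ Z := (le_sup_left : H ≤ H ⊔ T) ha
    have hbZ : b ∈ Z := (le_sup_right : T ≤ H ⊔ T) hb
    exact Submodule.mem_sup.mpr ⟨⟨a, haZ⟩, Submodule.mem_comap.mpr ha,
      ⟨b, hbZ⟩, Submodule.mem_comap.mpr hb, rfl⟩
  set π := Submodule.projectionOnto H' T' hcompl with hπdef
  set φlin : ↥Z →ₗ[ℝ] ℝ :=
    (f : E →ₗ[ℝ] ℝ) ∘ₗ (Z.subtype ∘ₗ (H'.subtype ∘ₗ π)) with hφdef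
  have hφapp : ∀ z : ↥Z, φlin z = f (((π z : ↥Z) : E)) := fun z => rfl
  have hφbound : ∀ z : ↥Z, ‖φlin z‖ ≤ C * ‖z‖ := by
    intro z
    have haH : ((π z : ↥Z) : E) ∈ H := Submodule.mem_comap.mp (π z).2
    have hzero : π (z - (π z : ↥Z)) = 0 := by
      rw [map_sub, Submodule.projectionOnto_apply_left hcompl (π z), sub_self]
    have hbT' : (z - (π z : ↥Z)) ∈ T' :=
      (Submodule.projectionOnto_apply_eq_zero_iff hcompl).mp hzero
    have hbT : ((z - (π z : ↥Z) : ↥Z) : E) ∈ T := Submodule.mem_comap.mp hbT'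
    have key : ‖((π z : ↥Z) : E)‖ ≤ C * ‖z‖ := by
      have := hC _ haH _ hbT
      have he : ((π z : ↥Z) : E) + ((z - (π z : ↥Z) : ↥Z) : E) = (z : E) := by
        push_cast
        abel
      rw [he] at this
      rwa [← Submodule.coe_norm] at this
    rw [hφapp]
    calc ‖f (((π z : ↥Z) : E))‖ ≤ ‖f‖ * ‖((π z : ↥Z) : E)‖ := f.le_opNorm _
      _ ≤ 1 * ‖((π z : ↥Z) : E)‖ := by
          exact mul_le_mul_of_nonneg_right hf (norm_nonneg _)
      _ = ‖((π z : ↥Z) : E)‖ := one_mul _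
      _ ≤ C * ‖z‖ := key
  set φ : ↥Z →L[ℝ] ℝ := LinearMap.mkContinuous φlin C hφbound with hφ'def
  obtain ⟨g, hg1, hg2⟩ := exists_extension_norm_eq Z φ
  have hφnorm : ‖φ‖ ≤ C := LinearMap.mkContinuous_norm_le φlin hC0 hφbound
  refine ⟨g, hg2 ▸ hφnorm, ?_, ?_⟩
  · intro a ha
    have haZ : a ∈ Z := (le_sup_left : H ≤ H ⊔ T) ha
    have := hg1 ⟨a, haZ⟩
    rw [this]
    show φlin _ = _
    rw [hφapp]
    congr 1
    have : π ⟨a, haZ⟩ = ⟨⟨a, haZ⟩, Submodule.mem_comap.mpr ha⟩ :=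
      Submodule.projectionOnto_apply_left hcompl ⟨⟨a, haZ⟩, Submodule.mem_comap.mpr ha⟩
    rw [this]
  · intro b hb
    have hbZ : b ∈ Z := (le_sup_right : T ≤ H ⊔ T) hb
    have := hg1 ⟨b, hbZ⟩
    rw [this]
    show φlin _ = _
    rw [hφapp]
    have : π ⟨b, hbZ⟩ = 0 :=
      Submodule.projectionOnto_apply_of_mem_right hcompl (Submodule.mem_comap.mpr hb)
    rw [this]
    simp

set_option maxHeartbeats 1000000 in
/-- For an SBD with projections `p i`, SBD constant
`K = sup_n ‖R_n‖` and asymptotic constant `K∞ = limsup_n ‖R_n‖`, every `x`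
satisfies `‖x‖ ≤ K∞ · limsup ‖P_n x‖` and `‖x‖ ≤ K · liminf ‖P_n x‖`
(the limsup/liminf are taken in `ℝ≥0∞` since `(‖P_n x‖)` may be unbounded). -/
theorem stmt9 [CompleteSpace E] (X : ℕ → Submodule ℝ E) (hX : IsSBD X)
    (p : ℕ → E →L[ℝ] E)
    (hp : ∀ n, LinearMap.range ((p n : E →ₗ[ℝ] E)) = X n ∧
      LinearMap.ker ((p n : E →ₗ[ℝ] E)) = (⨆ m ∈ {m | m ≠ n}, X m).topologicalClosure ∧
      ∀ y ∈ X n, p n y = y)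
    (K Kinf : ℝ)
    (hK : K = ⨆ n, skippedNorm X n n)
    (hKb : ∀ n, skippedNorm X n n ≤ K)
    (hKinf : Kinf = Filter.limsup (fun n => skippedNorm X n n) Filter.atTop)
    (x : E) :
    (‖x‖₊ : ℝ≥0∞) ≤ ENNReal.ofReal Kinf *
      Filter.limsup (fun n => ((‖(∑ i ∈ Finset.range (n + 1), p i) x‖₊ : ℝ≥0∞)))
        Filter.atTop ∧
    (‖x‖₊ : ℝ≥0∞) ≤ ENNReal.ofReal K *
      Filter.liminf (fun n => ((‖(∑ i ∈ Finset.range (n + 1), p i) x‖₊ : ℝ≥0∞)))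
        Filter.atTop := by
  
  obtain ⟨⟨hfd, hdense, hmin⟩, hsbd⟩ := hX
  set Q : ℕ → E →L[ℝ] E := fun k => ∑ i ∈ Finset.range (k + 1), p i with hQdef
  set Cs : ℕ → ℝ := fun k => skippedNorm X k k with hCsdef
  set H : ℕ → Submodule ℝ E := fun k => ⨆ i ∈ Set.Iio k, X i with hHdef
  set T : ℕ → Submodule ℝ E := fun k => (⨆ i ∈ Set.Ici (k + 1), X i).topologicalClosure
    with hTdef
  have hTc : ∀ k, IsClosed ((T k : Set E)) := fun k =>
    Submodule.isClosed_topologicalClosure _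
  have hker : ∀ i j : ℕ, i ≠ j → ∀ z ∈ X j, p i z = 0 := by
    intro i j hij z hz
    have h1 : X j ≤ ⨆ m ∈ {m | m ≠ i}, X m :=
      le_iSup₂ (f := fun m (_ : m ∈ {m | m ≠ i}) => X m) j (Ne.symm hij)
    have h2 : z ∈ LinearMap.ker ((p i : E →ₗ[ℝ] E)) := by
      rw [(hp i).2.1]
      exact Submodule.le_topologicalClosure _ (h1 hz)
    simpa using LinearMap.mem_ker.mp h2
  have hid : ∀ i, ∀ z ∈ X i, p i z = z := fun i => (hp i).2.2
  have htail : ∀ i k : ℕ, i ≤ k → ∀ z ∈ T k, p i z = 0 := by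
    intro i k hik z hz
    have h1 : (⨆ m ∈ Set.Ici (k+1), X m) ≤ ⨆ m ∈ {m | m ≠ i}, X m := by
      apply biSup_mono
      intro m hm
      have hm' : k + 1 ≤ m := hm
      show m ≠ i
      omega
    have h2 : z ∈ LinearMap.ker ((p i : E →ₗ[ℝ] E)) := by
      rw [(hp i).2.1]
      exact Submodule.topologicalClosure_mono h1 hz
    simpa using LinearMap.mem_ker.mp h2
  have hQfix : ∀ k, ∀ y ∈ (⨆ i ∈ Set.Iio (k + 1), X i), Q k y = y := by
    intro k y hy
    refine Submodule.iSup_induction (motive := fun y => Q k y = y)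
      (fun i => ⨆ _ : i ∈ Set.Iio (k+1), X i) hy ?_ ?_ ?_
    · intro i z hz
      by_cases hi : i ∈ Set.Iio (k+1)
      · change z ∈ ⨆ _ : i ∈ Set.Iio (k+1), X i at hz
        rw [iSup_pos hi] at hz
        have hQs : Q k z = ∑ j ∈ Finset.range (k+1), p j z := by
          rw [hQdef]
          exact ContinuousLinearMap.sum_apply _ _ _
        rw [hQs, Finset.sum_eq_single i]
        · exact hid i z hz
        · intro j _ hji
          exact hker j i hji z hz
        · intro hni
          exact absurd (Finset.mem_range.mpr hi) hni
      · change z ∈ ⨆ _ : i ∈ Set.Iio (k+1), X i at hz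
        rw [iSup_neg hi] at hz
        have : z = 0 := by simpa using hz
        rw [this, map_zero]
    · exact map_zero _
    · intro u v hu hv
      have hu' : Q k u = u := hu
      have hv' : Q k v = v := hv
      show Q k (u + v) = u + v
      rw [map_add, hu', hv']
  have hQtail : ∀ k, ∀ z ∈ T k, Q k z = 0 := by
    intro k z hz
    have hQs : Q k z = ∑ j ∈ Finset.range (k+1), p j z := by
      rw [hQdef]
      exact ContinuousLinearMap.sum_apply _ _ _
    rw [hQs]
    apply Finset.sum_eq_zero
    intro i hi
    exact htail i k (by simpa using Nat.lt_succ_iff.mp (Finset.mem_range.mp hi)) z hz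
  have hdisj : ∀ k, ∀ a, a ∈ H k → a ∈ T k → a = 0 := by
    intro k a haH haT
    have hmono : (⨆ i ∈ Set.Iio k, X i) ≤ ⨆ i ∈ Set.Iio (k+1), X i :=
      biSup_mono (fun i (hi : i ∈ Set.Iio k) => Set.mem_Iio.mpr (Nat.lt_succ_of_lt hi))
    have h1 : a ∈ ⨆ i ∈ Set.Iio (k+1), X i := hmono haH
    have h2 := hQfix k a h1
    rw [hQtail k a haT] at h2
    exact h2.symm
  have hHfd : ∀ k, FiniteDimensional ℝ ↥(H k) := by
    intro k
    have h1 : (⨆ i ∈ Set.Iio k, X i) ≤ ⨆ i ∈ Finset.range k, X i :=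
      biSup_mono (fun i hi => Finset.mem_range.mpr hi)
    have h2 : (⨆ i ∈ Finset.range k, X i) ≤ ⨆ i ∈ Set.Iio k, X i :=
      biSup_mono (fun i hi => Set.mem_Iio.mpr (Finset.mem_range.mp hi))
    have heq : H k = (Finset.range k).sup X := by
      rw [Finset.sup_eq_iSup]
      exact le_antisymm h1 h2
    rw [heq]
    infer_instance
  have hSkey : ∀ k, 0 ≤ Cs k ∧ ∀ a ∈ H k, ∀ b ∈ T k, ‖a‖ ≤ Cs k * ‖a + b‖ := by
    intro k
    haveI := hHfd k
    obtain ⟨C0, hC00, hC0⟩ := aux_exists_bound (H k) (T k) (hTc k) (hdisj k)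
    have hCs : Cs k = sInf {C : ℝ | 0 ≤ C ∧ ∀ a ∈ H k, ∀ b ∈ T k, ‖a‖ ≤ C * ‖a + b‖} := by
      rw [hCsdef]
      rfl
    have hne : Set.Nonempty {C : ℝ | 0 ≤ C ∧ ∀ a ∈ H k, ∀ b ∈ T k, ‖a‖ ≤ C * ‖a + b‖} :=
      ⟨C0, hC00, hC0⟩
    constructor
    · rw [hCs]
      exact Real.sInf_nonneg (fun c hc => hc.1)
    · intro a ha b hb
      by_cases h0 : ‖a + b‖ = 0
      · have h1 := hC0 a ha b hb
        rw [h0, mul_zero] at h1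
        rw [h0, mul_zero]
        exact h1
      · have hpos : 0 < ‖a + b‖ := lt_of_le_of_ne (norm_nonneg _) (Ne.symm h0)
        rw [hCs]
        exact (div_le_iff₀ hpos).mp
          (le_csInf hne (fun c hc => (div_le_iff₀ hpos).mpr (hc.2 a ha b hb)))
  by_cases hx0 : x = 0
  · constructor <;> simp [hx0]
  have hex : ∃ m, ∃ u, u ∈ X m ∧ u ≠ 0 := by
    by_contra h
    push_neg at h
    have hbot : (⨆ n, X n) = ⊥ := by
      rw [iSup_eq_bot]
      intro n
      rw [Submodule.eq_bot_iff]
      exact fun u hu => h n u hu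
    rw [hbot] at hdense
    have hbc : (⊥ : Submodule ℝ E).topologicalClosure = ⊥ :=
      IsClosed.submodule_topologicalClosure_eq (by rw [Submodule.bot_coe]; exact isClosed_singleton)
    rw [hbc] at hdense
    have : x ∈ (⊥ : Submodule ℝ E) := by rw [hdense]; trivial
    exact hx0 (by simpa using this)
  obtain ⟨m, u, hu, hu0⟩ := hex
  have hCge1 : ∀ k, m < k → 1 ≤ Cs k := by
    intro k hk
    obtain ⟨hCs0, hCskey⟩ := hSkey k
    have hle : X m ≤ H k := le_iSup₂ (f := fun i (_ : i ∈ Set.Iio k) => X i) m (Set.mem_Iio.mpr hk)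
    have huH : u ∈ H k := hle hu
    have h1 := hCskey u huH 0 (T k).zero_mem
    rw [add_zero] at h1
    nlinarith [norm_pos_iff.mpr hu0]
  have hK1 : 1 ≤ K := (hCge1 (m+1) (by omega)).trans (hKb (m+1))
  have hKpos : 0 < K := lt_of_lt_of_le one_pos hK1
  have hCbdd : Filter.IsBoundedUnder (· ≤ ·) Filter.atTop (fun n => skippedNorm X n n) :=
    Filter.isBoundedUnder_of ⟨K, fun n => hKb n⟩
  have hKinf1 : 1 ≤ Kinf := by
    rw [hKinf]
    refine Filter.le_limsup_of_frequently_le ?_ hCbdd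
    exact (Filter.eventually_atTop.mpr ⟨m+1, fun k hk => hCge1 k (by omega)⟩).frequently
  obtain ⟨f, hf1, hf2⟩ := exists_dual_vector ℝ x (norm_ne_zero_iff.mpr hx0)
  have hfx : f x = ‖x‖ := by exact_mod_cast hf2
  have MAIN : ∀ ε : ℝ, 0 < ε → ∃ N : ℕ, ∀ k, N ≤ k →
      ‖x‖ ≤ Cs k * ‖Q k x‖ + (1 + Cs k) * ε := by
    intro ε hε
    have hd : Dense ((⨆ n, X n : Submodule ℝ E) : Set E) :=
      Submodule.dense_iff_topologicalClosure_eq_top.mpr hdense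
    obtain ⟨y, hy, hxy⟩ := hd.exists_dist_lt x hε
    rw [dist_eq_norm] at hxy
    obtain ⟨s, hs⟩ := Submodule.mem_iSup_iff_exists_finset.mp hy
    refine ⟨(s.sup id) + 1, fun k hk => ?_⟩
    have hmono : (⨆ i ∈ s, X i) ≤ ⨆ i ∈ Set.Iio k, X i := by
      refine biSup_mono (fun i (hi : i ∈ s) => ?_)
      have h1 : i ≤ s.sup id := Finset.le_sup (f := id) hi
      exact Set.mem_Iio.mpr (by omega)
    have hyH : y ∈ H k := hmono hs
    obtain ⟨hCs0, hCskey⟩ := hSkey k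
    obtain ⟨g, hgnorm, hgH, hgT⟩ :=
      aux_exists_functional (H k) (T k) f hf1.le (Cs k) hCs0 hCskey
    have hgQ : g x = g (Q k x) := by
      have heq : (g : E → ℝ) = (fun z => g (Q k z)) := by
        refine Continuous.ext_on hd g.continuous (g.continuous.comp (Q k).continuous) ?_
        intro z hz
        refine Submodule.iSup_induction (motive := fun z => g z = g (Q k z)) X hz ?_ ?_ ?_
        · intro j z hzj
          show g z = g (Q k z)
          by_cases hjk : j < k + 1
          · rw [hQfix k z
              ((le_iSup₂ (f := fun i (_ : i ∈ Set.Iio (k+1)) => X i) j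
                (Set.mem_Iio.mpr hjk)) hzj)]
          · have hzT : z ∈ T k := by
              rw [hTdef]
              refine Submodule.le_topologicalClosure _ ?_
              exact (le_iSup₂ (f := fun i (_ : i ∈ Set.Ici (k+1)) => X i) j
                (Set.mem_Ici.mpr (by omega))) hzj
            rw [hgT z hzT, hQtail k z hzT, map_zero]
        · show g (0:E) = g (Q k 0)
          rw [map_zero, map_zero, map_zero]
        · intro a b ha hb
          have ha' : g a = g (Q k a) := ha
          have hb' : g b = g (Q k b) := hb
          show g (a + b) = g (Q k (a + b))
          rw [map_add, map_add, map_add, ha', hb']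
      exact congrFun heq x
    have h1 : ‖x‖ ≤ f y + ε := by
      have h2 := f.le_opNorm (x - y)
      rw [hf1, one_mul] at h2
      have h3 : f x - f y ≤ ‖x - y‖ := by
        have h4 : f (x - y) ≤ ‖f (x-y)‖ := le_trans (le_abs_self _) (le_of_eq (Real.norm_eq_abs _).symm)
        have h4' : f (x - y) = f x - f y := map_sub f x y
        linarith
      rw [hfx] at h3
      linarith
    have h2 : f y = g y := (hgH y hyH).symm
    have h3 : g y ≤ g x + Cs k * ε := by
      have h4 := g.le_opNorm (y - x)
      have h5 : g (y - x) ≤ ‖g‖ * ‖y - x‖ :=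
        le_trans (le_trans (le_abs_self _) (le_of_eq (Real.norm_eq_abs _).symm)) h4
      have h5' : g (y - x) = g y - g x := map_sub g y x
      rw [h5'] at h5
      have h6 : ‖g‖ * ‖y - x‖ ≤ Cs k * ε := by
        apply _root_.mul_le_mul hgnorm ?_ (norm_nonneg _) hCs0
        rw [norm_sub_rev]
        exact hxy.le
      linarith
    have h5 : g (Q k x) ≤ Cs k * ‖Q k x‖ := by
      have h6 := g.le_opNorm (Q k x)
      have h7 : g (Q k x) ≤ ‖g‖ * ‖Q k x‖ :=
        le_trans (le_trans (le_abs_self _) (le_of_eq (Real.norm_eq_abs _).symm)) h6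
      have h8 : ‖g‖ * ‖Q k x‖ ≤ Cs k * ‖Q k x‖ :=
        mul_le_mul_of_nonneg_right hgnorm (norm_nonneg _)
      linarith
    rw [hgQ] at h3
    linarith
  constructor
  · -- limsup part
    set L := Filter.limsup (fun n => ((‖Q n x‖₊ : ℝ≥0∞))) Filter.atTop with hLdef
    by_cases hL : L = ⊤
    · rw [hL, ENNReal.mul_top]
      · exact le_top
      · rw [Ne, ENNReal.ofReal_eq_zero]
        push_neg
        linarith
    · have hreal : ‖x‖ ≤ Kinf * L.toReal := by
        apply le_of_forall_pos_le_add
        intro η hη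
        have hLt0 : (0:ℝ) ≤ L.toReal := ENNReal.toReal_nonneg
        have hD : (0:ℝ) < L.toReal + Kinf + 1 := by linarith
        set δ : ℝ := min 1 (η / (2 * (L.toReal + Kinf + 1))) with hδdef
        have hδpos : 0 < δ := lt_min one_pos (by positivity)
        set ε : ℝ := η / (2 * (1 + K)) with hεdef
        have hεpos : 0 < ε := by
          apply div_pos hη
          linarith
        obtain ⟨N, hN⟩ := MAIN ε hεpos
        have ev1 : ∀ᶠ k in Filter.atTop, Cs k < Kinf + δ := by
          refine Filter.eventually_lt_of_limsup_lt ?_ hCbdd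
          rw [← hKinf]
          linarith
        have ev2 : ∀ᶠ k in Filter.atTop, (‖Q k x‖₊ : ℝ≥0∞) < L + ENNReal.ofReal δ := by
          refine Filter.eventually_lt_of_limsup_lt ?_
          rw [← hLdef]
          refine ENNReal.lt_add_right hL ?_
          rw [Ne, ENNReal.ofReal_eq_zero]
          push_neg
          linarith
        obtain ⟨k, ⟨hk1, hk2⟩, hk3⟩ := ((ev1.and ev2).and (Filter.eventually_ge_atTop N)).exists
        have hQk : ‖Q k x‖ ≤ L.toReal + δ := by
          have h7 := ENNReal.toReal_mono
            (ENNReal.add_ne_top.mpr ⟨hL, ENNReal.ofReal_ne_top⟩) hk2.le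
          rw [ENNReal.toReal_add hL ENNReal.ofReal_ne_top,
            ENNReal.toReal_ofReal hδpos.le] at h7
          simpa using h7
        have hmain := hN k hk3
        obtain ⟨hCs0, _⟩ := hSkey k
        have hCsK := hKb k
        have e1 : Cs k * ‖Q k x‖ ≤ (Kinf + δ) * (L.toReal + δ) :=
          _root_.mul_le_mul hk1.le hQk (norm_nonneg _) (by linarith)
        have e2 : (1 + Cs k) * ε ≤ (1 + K) * ε := by nlinarith
        have e3 : (1 + K) * ε = η / 2 := by
          rw [hεdef]
          field_simp
        have hδ1 : δ ≤ 1 := min_le_left _ _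
        have hδ2 : δ * (L.toReal + Kinf + 1) ≤ η / 2 := by
          have h8 : δ ≤ η / (2 * (L.toReal + Kinf + 1)) := min_le_right _ _
          calc δ * (L.toReal + Kinf + 1)
              ≤ (η / (2 * (L.toReal + Kinf + 1))) * (L.toReal + Kinf + 1) :=
                mul_le_mul_of_nonneg_right h8 hD.le
            _ = η / 2 := by field_simp
        have e4 : (Kinf + δ) * (L.toReal + δ) ≤ Kinf * L.toReal + η / 2 := by nlinarith
        linarith
      calc (‖x‖₊ : ℝ≥0∞) = ENNReal.ofReal ‖x‖ := (ofReal_norm x).symm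
        _ ≤ ENNReal.ofReal (Kinf * L.toReal) := ENNReal.ofReal_le_ofReal hreal
        _ = ENNReal.ofReal Kinf * ENNReal.ofReal L.toReal :=
            ENNReal.ofReal_mul (by linarith)
        _ = ENNReal.ofReal Kinf * L := by rw [ENNReal.ofReal_toReal hL]
  · -- liminf part
    set A := Filter.liminf (fun n => ((‖Q n x‖₊ : ℝ≥0∞))) Filter.atTop with hAdef
    by_cases hA : A = ⊤
    · rw [hA, ENNReal.mul_top]
      · exact le_top
      · rw [Ne, ENNReal.ofReal_eq_zero]
        push_neg
        linarith
    · have hreal : ‖x‖ ≤ K * A.toReal := by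
        apply le_of_forall_pos_le_add
        intro η hη
        set δ : ℝ := η / (2 * K) with hδdef
        have hδpos : 0 < δ := by positivity
        set ε : ℝ := η / (2 * (1 + K)) with hεdef
        have hεpos : 0 < ε := by
          apply div_pos hη
          linarith
        obtain ⟨N, hN⟩ := MAIN ε hεpos
        have hfreq : ∃ᶠ k in Filter.atTop, (‖Q k x‖₊ : ℝ≥0∞) < A + ENNReal.ofReal δ := by
          have hlt : A < A + ENNReal.ofReal δ := by
            refine ENNReal.lt_add_right hA ?_
            rw [Ne, ENNReal.ofReal_eq_zero]
            push_neg
            linarith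
          exact Filter.frequently_lt_of_liminf_lt
            (u := fun n => ((‖Q n x‖₊ : ℝ≥0∞)))
            (isCoboundedUnder_ge_of_le _ (x := ⊤) (fun i => le_top)) hlt
        obtain ⟨k, hk2, hk3⟩ := (hfreq.and_eventually (Filter.eventually_ge_atTop N)).exists
        have hQk : ‖Q k x‖ ≤ A.toReal + δ := by
          have h7 := ENNReal.toReal_mono
            (ENNReal.add_ne_top.mpr ⟨hA, ENNReal.ofReal_ne_top⟩) hk2.le
          rw [ENNReal.toReal_add hA ENNReal.ofReal_ne_top,
            ENNReal.toReal_ofReal hδpos.le] at h7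
          simpa using h7
        have hmain := hN k hk3
        obtain ⟨hCs0, _⟩ := hSkey k
        have hCsK := hKb k
        have hAt0 : (0:ℝ) ≤ A.toReal := ENNReal.toReal_nonneg
        have e1 : Cs k * ‖Q k x‖ ≤ K * (A.toReal + δ) :=
          _root_.mul_le_mul hCsK hQk (norm_nonneg _) hKpos.le
        have e2 : (1 + Cs k) * ε ≤ (1 + K) * ε := by nlinarith
        have e3 : (1 + K) * ε = η / 2 := by
          rw [hεdef]
          field_simp
        have e4 : K * δ = η / 2 := by
          rw [hδdef]
          field_simp
        nlinarith
      calc (‖x‖₊ : ℝ≥0∞) = ENNReal.ofReal ‖x‖ := (ofReal_norm x).symm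
        _ ≤ ENNReal.ofReal (K * A.toReal) := ENNReal.ofReal_le_ofReal hreal
        _ = ENNReal.ofReal K * ENNReal.ofReal A.toReal :=
            ENNReal.ofReal_mul hKpos.le
        _ = ENNReal.ofReal K * A := by rw [ENNReal.ofReal_toReal hA]
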